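/- Let 𝕜 be a commutative ring, k ≥ 1, and R = 𝕜[x_1,…,x_k]/(x_1x_2⋯x_k). For any two disjoint nonempty subsets I, J ⊆ {1,…,k}, the sequence of R-modules 0 → R/(x_J) → R/(x_{I∪J}) → R/(x_I) → 0 is exact, where the first map is multiplication by x_I (well defined since x_I·(x_J) ⊆ (x_{I∪J})) and the second map is the canonical projection (well defined since (x_{I∪J}) ⊆ (x_I)). -/
import Mathlib


open MvPolynomial

/-- The ring `R = 𝕜[x₁,…,x_k]/(x₁x₂⋯x_k)`, with variables indexed by `Fin k`. -/
abbrev NodalRing (𝕜 : Type*) [CommRing 𝕜] (k : ℕ) : Type _ :=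
  MvPolynomial (Fin k) 𝕜 ⧸
    Ideal.span {∏ i : Fin k, (X i : MvPolynomial (Fin k) 𝕜)}

/-- `x_I`: the image in `R` of the monomial `∏_{i ∈ I} x_i` (with `x_∅ = 1`). -/
noncomputable def xgen (𝕜 : Type*) [CommRing 𝕜] (k : ℕ) (I : Finset (Fin k)) :
    NodalRing 𝕜 k :=
  Ideal.Quotient.mk _ (∏ i ∈ I, X i)

lemma xgen_union (𝕜 : Type*) [CommRing 𝕜] (k : ℕ)
    (I J : Finset (Fin k)) (hdisj : Disjoint I J) :
    xgen 𝕜 k (I ∪ J) = xgen 𝕜 k I * xgen 𝕜 k J := by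
  simp only [xgen, ← map_mul, Finset.prod_union hdisj]

set_option maxHeartbeats 2000000 in
set_option synthInstance.maxHeartbeats 1000000 in
/-- **The short exact sequence `0 → R/(x_J) → R/(x_{I∪J}) → R/(x_I) → 0`**
(defining the module `M{I,J}` of the paper), where the first map is
multiplication by `x_I` and the second is the canonical projection, for
disjoint nonempty `I, J ⊆ {1,…,k}`. -/
theorem stmt_9 (𝕜 : Type*) [CommRing 𝕜] (k : ℕ) (hk : 1 ≤ k)
    (I J : Finset (Fin k)) (hdisj : Disjoint I J)
    (hI : I.Nonempty) (hJ : J.Nonempty) :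
    ∃ (f : (NodalRing 𝕜 k ⧸ Ideal.span {xgen 𝕜 k J}) →ₗ[NodalRing 𝕜 k]
          (NodalRing 𝕜 k ⧸ Ideal.span {xgen 𝕜 k (I ∪ J)}))
      (g : (NodalRing 𝕜 k ⧸ Ideal.span {xgen 𝕜 k (I ∪ J)}) →ₗ[NodalRing 𝕜 k]
          (NodalRing 𝕜 k ⧸ Ideal.span {xgen 𝕜 k I})),
      (∀ s : NodalRing 𝕜 k,
        f (Submodule.Quotient.mk s) = Submodule.Quotient.mk (xgen 𝕜 k I * s)) ∧
      (∀ s : NodalRing 𝕜 k,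
        g (Submodule.Quotient.mk s) = Submodule.Quotient.mk s) ∧
      Function.Injective f ∧
      Function.Surjective g ∧
      LinearMap.range f = LinearMap.ker g := by
  classical
  have hab : xgen 𝕜 k (I ∪ J) = xgen 𝕜 k I * xgen 𝕜 k J := xgen_union 𝕜 k I J hdisj
  have hcond : Ideal.span {xgen 𝕜 k J} ≤
      Submodule.comap (LinearMap.lsmul (NodalRing 𝕜 k) (NodalRing 𝕜 k) (xgen 𝕜 k I))
        (Ideal.span {xgen 𝕜 k (I ∪ J)}) := by
    rw [Ideal.span_le]
    intro x hx
    simp only [Set.mem_singleton_iff] at hx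
    subst hx
    show xgen 𝕜 k I * xgen 𝕜 k J ∈ Ideal.span {xgen 𝕜 k (I ∪ J)}
    rw [hab]
    exact Ideal.mem_span_singleton_self _
  have hle : Ideal.span {xgen 𝕜 k (I ∪ J)} ≤
      Submodule.comap (LinearMap.id (R := NodalRing 𝕜 k)) (Ideal.span {xgen 𝕜 k I}) := by
    rw [Ideal.span_le]
    intro x hx
    simp only [Set.mem_singleton_iff] at hx
    subst hx
    show xgen 𝕜 k (I ∪ J) ∈ Ideal.span {xgen 𝕜 k I}
    rw [hab, Ideal.mem_span_singleton]
    exact Dvd.intro _ rfl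
  refine ⟨Submodule.mapQ _ _ (LinearMap.lsmul _ _ (xgen 𝕜 k I)) hcond,
    Submodule.mapQ _ _ LinearMap.id hle, fun s => rfl, fun s => rfl, ?_, ?_, ?_⟩
  · -- injectivity of f
    rw [injective_iff_map_eq_zero]
    intro x hx
    obtain ⟨s, rfl⟩ := Submodule.Quotient.mk_surjective _ x
    rw [Submodule.mapQ_apply, Submodule.Quotient.mk_eq_zero] at hx
    rw [Submodule.Quotient.mk_eq_zero]
    simp only [LinearMap.lsmul_apply, smul_eq_mul] at hx
    rw [Ideal.mem_span_singleton] at hx ⊢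
    obtain ⟨t, ht⟩ := hx
    obtain ⟨s', rfl⟩ := Ideal.Quotient.mk_surjective s
    obtain ⟨t', rfl⟩ := Ideal.Quotient.mk_surjective t
    rw [hab] at ht
    -- lift the equation to the polynomial ring
    have key : Ideal.Quotient.mk _
        ((∏ i ∈ I, X i) * s' - ((∏ i ∈ I, X i) * (∏ i ∈ J, X i)) * t')
        = (0 : NodalRing 𝕜 k) := by
      rw [map_sub, sub_eq_zero, map_mul, map_mul, map_mul]
      exact ht
    rw [Ideal.Quotient.eq_zero_iff_mem, Ideal.mem_span_singleton] at key
    obtain ⟨v, hv⟩ := key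
    have hm : (∏ i : Fin k, (X i : MvPolynomial (Fin k) 𝕜))
        = (∏ i ∈ I, X i) * ∏ i ∈ Iᶜ, X i :=
      (Finset.prod_mul_prod_compl I _).symm
    rw [hm] at hv
    have hreg := isRegular_prod_X (R := 𝕜) I
    have hs' : s' = (∏ i ∈ J, X i) * t' + (∏ i ∈ Iᶜ, X i) * v := by
      apply hreg.left
      show (∏ i ∈ I, X i) * s'
          = (∏ i ∈ I, X i) * ((∏ i ∈ J, X i) * t' + (∏ i ∈ Iᶜ, X i) * v)
      linear_combination hv
    have hJc : J ⊆ Iᶜ := by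
      intro j hj
      simp only [Finset.mem_compl]
      exact fun hjI => (Finset.disjoint_left.mp hdisj hjI) hj
    have hc : (∏ i ∈ Iᶜ, (X i : MvPolynomial (Fin k) 𝕜))
        = (∏ i ∈ Iᶜ \ J, X i) * ∏ i ∈ J, X i :=
      (Finset.prod_sdiff hJc).symm
    refine ⟨Ideal.Quotient.mk _ (t' + (∏ i ∈ Iᶜ \ J, X i) * v), ?_⟩
    rw [xgen, ← map_mul]
    congr 1
    rw [hs', hc]
    ring
  · -- surjectivity of g
    intro x
    obtain ⟨s, rfl⟩ := Submodule.Quotient.mk_surjective _ x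
    exact ⟨Submodule.Quotient.mk s, rfl⟩
  · -- range f = ker g
    apply le_antisymm
    · rintro _ ⟨y, rfl⟩
      obtain ⟨s, rfl⟩ := Submodule.Quotient.mk_surjective _ y
      rw [LinearMap.mem_ker, Submodule.mapQ_apply, Submodule.mapQ_apply]
      simp only [LinearMap.lsmul_apply, smul_eq_mul, LinearMap.id_coe, id_eq]
      rw [Submodule.Quotient.mk_eq_zero, Ideal.mem_span_singleton]
      exact Dvd.intro s rfl
    · intro x hx
      obtain ⟨s, rfl⟩ := Submodule.Quotient.mk_surjective _ x
      rw [LinearMap.mem_ker, Submodule.mapQ_apply] at hx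
      simp only [LinearMap.id_coe, id_eq] at hx
      rw [Submodule.Quotient.mk_eq_zero, Ideal.mem_span_singleton] at hx
      obtain ⟨t, ht⟩ := hx
      refine ⟨Submodule.Quotient.mk t, ?_⟩
      rw [Submodule.mapQ_apply]
      simp only [LinearMap.lsmul_apply, smul_eq_mul]
      rw [← ht]
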